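/- In the path-star tree P_{n−g,g}, the number of subtrees containing vertex i equals i(n−g−i) + i·2^g for 1 ≤ i ≤ n−g, and equals 1 + (n−g)·2^{g−1} for each of the g pendant vertices attached to vertex n−g. -/

import Mathlib

open SimpleGraph

/-- Eccentricity of a vertex: maximum distance to any vertex. -/
noncomputable def ecc {V : Type*} [Fintype V] (G : SimpleGraph V) (v : V) : ℕ :=
  Finset.univ.sup fun u => G.dist u v

/-- Center: vertices of minimum eccentricity. -/
noncomputable def center {V : Type*} [Fintype V] (G : SimpleGraph V) : Set V :=
  {v | ∀ u, ecc G v ≤ ecc G u}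

/-- Number of vertices of the component of `G - v` containing `u`; this equals the
number of edges of the corresponding branch of a tree at `v`. -/
noncomputable def branchSize {V : Type*} (G : SimpleGraph V) (v : V) (u : {x : V // x ≠ v}) : ℕ :=
  Set.ncard {x : {y : V // y ≠ v} | (G.induce {y : V | y ≠ v}).Reachable ⟨u.1, u.2⟩ ⟨x.1, x.2⟩}

/-- Weight of a vertex: maximal number of edges in a branch at `v`. -/
noncomputable def weight {V : Type*} [Fintype V] [DecidableEq V] (G : SimpleGraph V) (v : V) : ℕ :=
  Finset.univ.sup fun u : {x : V // x ≠ v} => branchSize G v u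

/-- Centroid: vertices of minimum weight. -/
noncomputable def centroid {V : Type*} [Fintype V] [DecidableEq V] (G : SimpleGraph V) : Set V :=
  {v | ∀ u, weight G v ≤ weight G u}

/-- Number of subtrees (vertex sets inducing a connected subgraph) containing all of `A`. -/
noncomputable def numSubtreesOn {V : Type*} (G : SimpleGraph V) (A : Set V) : ℕ :=
  Set.ncard {S : Set V | A ⊆ S ∧ (G.induce S).Connected}

/-- Number of subtrees containing the vertex `v`. -/
noncomputable def numSubtrees {V : Type*} (G : SimpleGraph V) (v : V) : ℕ :=
  numSubtreesOn G {v}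

/-- Subtree core: vertices maximizing the number of subtrees containing them. -/
noncomputable def subtreeCore {V : Type*} (G : SimpleGraph V) : Set V :=
  {v | ∀ u, numSubtrees G u ≤ numSubtrees G v}

/-- Distance between two sets of vertices: minimum pairwise distance. -/
noncomputable def setDist {V : Type*} (G : SimpleGraph V) (A B : Set V) : ℕ :=
  sInf {d | ∃ a ∈ A, ∃ b ∈ B, G.dist a b = d}

/-- The path-star tree `P_{n-g,g}`: a path on vertices `0, …, n-g-1` (paper labels
`1, …, n-g`) with `g` pendant vertices `n-g, …, n-1` attached to vertex `n-g-1`. -/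
def pathStar (n g : ℕ) : SimpleGraph (Fin n) :=
  SimpleGraph.fromRel fun i j =>
    (i.val + 1 = j.val ∧ j.val < n - g) ∨ (i.val = n - g - 1 ∧ n - g ≤ j.val)

/-- The tree obtained from `G` by detaching the pendant vertex `y` and attaching it
as a pendant vertex adjacent to `w`. -/
def reattach {V : Type*} (G : SimpleGraph V) (y w : V) : SimpleGraph V :=
  SimpleGraph.fromRel fun a b => (G.Adj a b ∧ a ≠ y ∧ b ≠ y) ∨ (a = y ∧ b = w)

namespace PS

variable {n g : ℕ}

/-- interval of vertices -/
def iv (n a b : ℕ) : Set (Fin n) := {x | a ≤ x.val ∧ x.val ≤ b}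

lemma mem_iv {a b : ℕ} {x : Fin n} : x ∈ iv n a b ↔ a ≤ x.val ∧ x.val ≤ b := Iff.rfl

lemma adj_iff {x y : Fin n} : (pathStar n g).Adj x y ↔ x ≠ y ∧
    (((x.val + 1 = y.val ∧ y.val < n - g) ∨ (x.val = n - g - 1 ∧ n - g ≤ y.val)) ∨
     ((y.val + 1 = x.val ∧ x.val < n - g) ∨ (y.val = n - g - 1 ∧ n - g ≤ x.val))) := by
  simp [pathStar, fromRel_adj]

lemma adj_path {k : ℕ} (h : k + 1 < n - g) (hn : n - g ≤ n) :
    (pathStar n g).Adj ⟨k, by omega⟩ ⟨k + 1, by omega⟩ := by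
  rw [adj_iff]
  constructor
  · intro hc; have := congrArg Fin.val hc; simp at this
  · exact Or.inl (Or.inl ⟨rfl, h⟩)

lemma adj_pend (h3 : 3 ≤ n - g) (hgn : g ≤ n) {p : Fin n} (hp : n - g ≤ p.val) :
    (pathStar n g).Adj ⟨n - g - 1, by omega⟩ p := by
  rw [adj_iff]
  constructor
  · intro hc; have := congrArg Fin.val hc; simp at this; omega
  · exact Or.inl (Or.inr ⟨rfl, hp⟩)

lemma pend_nbr (h3 : 3 ≤ n - g) {p z : Fin n} (hp : n - g ≤ p.val)
    (h : (pathStar n g).Adj p z) : z.val = n - g - 1 := by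
  rw [adj_iff] at h
  obtain ⟨-, h⟩ := h
  omega

/-- the "level" function used for intermediate value arguments -/
def lv (n g : ℕ) (x : Fin n) : ℕ := min x.val (n - g - 1)

lemma lv_lipschitz (h3 : 3 ≤ n - g) {a b : Fin n} (h : (pathStar n g).Adj a b) :
    lv n g a ≤ lv n g b + 1 ∧ lv n g b ≤ lv n g a + 1 := by
  rw [adj_iff] at h
  obtain ⟨-, h⟩ := h
  unfold lv
  omega

/-- intermediate value for walks -/
lemma walk_iv {V : Type*} {G : SimpleGraph V} (f : V → ℕ)
    (hf : ∀ a b, G.Adj a b → f a ≤ f b + 1 ∧ f b ≤ f a + 1) {u v : V}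
    (p : G.Walk u v) : ∀ c : ℕ, f u ≤ c → c ≤ f v → ∃ w ∈ p.support, f w = c := by
  induction p with
  | nil => intro c h1 h2; exact ⟨_, by simp, le_antisymm h1 h2⟩
  | @cons a b v hab q ih =>
    intro c h1 h2
    by_cases hc : f b ≤ c
    · obtain ⟨w, hw, hfw⟩ := ih c hc h2
      exact ⟨w, by simp [hw], hfw⟩
    · have := (hf a b hab).2
      exact ⟨a, by simp, by omega⟩

/-- walks in an induced subgraph have support inside the set -/
lemma reach_exists_mem {S : Set (Fin n)} {u v : ↥S}
    (h : ((pathStar n g).induce S).Reachable u v) (h3 : 3 ≤ n - g) {c : ℕ}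
    (h1 : lv n g u.1 ≤ c) (h2 : c ≤ lv n g v.1) :
    ∃ w : Fin n, w ∈ S ∧ lv n g w = c := by
  obtain ⟨p⟩ := h
  obtain ⟨w, hw, hfw⟩ := walk_iv (lv n g) (fun a b hab => lv_lipschitz h3 hab)
    (p.map (SimpleGraph.Embedding.induce S).toHom) c h1 h2
  rw [SimpleGraph.Walk.support_map] at hw
  obtain ⟨w', hw', rfl⟩ := List.mem_map.mp hw
  exact ⟨_, w'.2, hfw⟩

/-- interval membership forced by connectivity -/
lemma mem_of_between {S : Set (Fin n)} (hconn : ((pathStar n g).induce S).Connected)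
    (h3 : 3 ≤ n - g) (hgn : g ≤ n) {x y : Fin n} (hx : x ∈ S) (hy : y ∈ S) {c : ℕ}
    (h1 : min x.val (n - g - 1) ≤ c) (h2 : c ≤ min y.val (n - g - 1)) (hc : c + 2 ≤ n - g) :
    (⟨c, by omega⟩ : Fin n) ∈ S := by
  have hr := hconn.preconnected ⟨x, hx⟩ ⟨y, hy⟩
  obtain ⟨w, hwS, hw⟩ := reach_exists_mem hr h3 h1 h2
  have : w.val = c := by unfold lv at hw; omega
  have : w = (⟨c, by omega⟩ : Fin n) := Fin.ext this
  rwa [this] at hwS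

/-- a pendant vertex in a non-singleton connected set forces the hub -/
lemma hub_mem {S : Set (Fin n)} (hconn : ((pathStar n g).induce S).Connected)
    (h3 : 3 ≤ n - g) (hgn : g ≤ n) {p q : Fin n} (hp : p ∈ S) (hpval : n - g ≤ p.val)
    (hq : q ∈ S) (hne : q ≠ p) : (⟨n - g - 1, by omega⟩ : Fin n) ∈ S := by
  have hr := hconn.preconnected ⟨p, hp⟩ ⟨q, hq⟩
  obtain ⟨w⟩ := hr
  cases w with
  | nil => exact absurd rfl hne
  | cons h rest =>
    rename_i b
    have hadj : (pathStar n g).Adj p b.1 := h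
    have := pend_nbr h3 hpval hadj
    have hb : b.1 = (⟨n - g - 1, by omega⟩ : Fin n) := Fin.ext this
    rw [← hb]; exact b.2

/-- connectivity of the standard shapes -/
lemma conn_of_shape (h3 : 3 ≤ n - g) (hgn : g ≤ n) {a b : ℕ} (hab : a ≤ b)
    (hbm : b ≤ n - g - 1) (T : Set (Fin n)) (hT : ∀ x ∈ T, n - g ≤ x.val)
    (hTb : T.Nonempty → b = n - g - 1) :
    ((pathStar n g).induce (iv n a b ∪ T)).Connected := by
  set S := iv n a b ∪ T with hS
  have hbase : (⟨b, by omega⟩ : Fin n) ∈ S := Or.inl ⟨hab, le_refl _⟩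
  -- reach from any interval vertex up to b
  have key : ∀ k c (h1 : a ≤ c) (h2 : c ≤ b), b - c = k →
      ((pathStar n g).induce S).Reachable ⟨⟨c, by omega⟩, Or.inl ⟨h1, h2⟩⟩ ⟨⟨b, by omega⟩, hbase⟩ := by
    intro k
    induction k with
    | zero =>
      intro c h1 h2 hk
      have : c = b := by omega
      subst this
      rfl
    | succ k ih =>
      intro c h1 h2 hk
      have hcb : c < b := by omega
      have hmem : (⟨c + 1, by omega⟩ : Fin n) ∈ S := Or.inl ⟨by show a ≤ c + 1; omega, by show c + 1 ≤ b; omega⟩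
      have hadj : ((pathStar n g).induce S).Adj ⟨⟨c, by omega⟩, Or.inl ⟨h1, h2⟩⟩ ⟨⟨c+1, by omega⟩, hmem⟩ := by
        show (pathStar n g).Adj _ _
        exact adj_path (by omega) (by omega)
      have hrec := ih (c+1) (by omega) (by omega) (by omega)
      exact hadj.reachable.trans hrec
  have reach_base : ∀ x : ↥S, ((pathStar n g).induce S).Reachable x ⟨⟨b, by omega⟩, hbase⟩ := by
    rintro ⟨x, hx | hx⟩
    · obtain ⟨h1, h2⟩ := hx
      have := key (b - x.val) x.val h1 h2 rfl
      exact this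
    · have hb : b = n - g - 1 := hTb ⟨x, hx⟩
      subst hb
      have hadj : ((pathStar n g).induce S).Adj ⟨x, Or.inr hx⟩ ⟨⟨n - g - 1, by omega⟩, hbase⟩ := by
        show (pathStar n g).Adj _ _
        exact (adj_pend h3 hgn (hT x hx)).symm
      exact hadj.reachable
  rw [connected_iff]
  exact ⟨fun u v => (reach_base u).trans (reach_base v).symm, ⟨⟨_, hbase⟩⟩⟩

lemma singleton_conn {V : Type*} (G : SimpleGraph V) (p : V) :
    (G.induce {p}).Connected := by
  rw [connected_iff]
  refine ⟨fun u v => ?_, ⟨⟨p, rfl⟩⟩⟩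
  have : u = v := Subtype.ext (u.2.trans v.2.symm)
  exact this ▸ Reachable.refl _

/-- pendant vertex type -/
def Pend (n g : ℕ) := {x : Fin n // n - g ≤ x.val}

/-- decomposition of a connected set containing the hub -/
lemma decomp {S : Set (Fin n)} (hconn : ((pathStar n g).induce S).Connected)
    (h3 : 3 ≤ n - g) (hgn : g ≤ n)
    (hhub : (⟨n - g - 1, by omega⟩ : Fin n) ∈ S) :
    ∃ a, a ≤ n - g - 1 ∧ (∀ x ∈ S, x.val < n - g → a ≤ x.val) ∧
      S = iv n a (n - g - 1) ∪ Subtype.val '' {x : Pend n g | x.1 ∈ S} := by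
  classical
  set C : Set ℕ := {c : ℕ | c < n - g ∧ ∃ h : c < n, (⟨c, h⟩ : Fin n) ∈ S} with hC
  have hCne : (n - g - 1) ∈ C := ⟨by omega, by omega, hhub⟩
  have hbdd : BddAbove C := ⟨n - g, fun c hc => le_of_lt hc.1⟩
  set a := sInf C with ha
  have haC : a ∈ C := Nat.sInf_mem ⟨_, hCne⟩
  have hale : a ≤ n - g - 1 := Nat.sInf_le hCne
  have hint : ∀ c, a ≤ c → c ≤ n - g - 1 → c ∈ C := by
    intro c h1 h2
    by_cases hcb : c = n - g - 1
    · exact hcb ▸ hCne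
    · have hc2 : c + 2 ≤ n - g := by omega
      obtain ⟨haC1, hac, haS⟩ := haC
      have := mem_of_between hconn h3 hgn haS hhub (c := c)
        (by show min a (n - g - 1) ≤ c; omega) (by show c ≤ min (n - g - 1) (n - g - 1); omega) hc2
      exact ⟨by omega, by omega, this⟩
  refine ⟨a, hale, fun x hx hxv => Nat.sInf_le ⟨hxv, x.2, by simpa using hx⟩, ?_⟩
  ext x
  constructor
  · intro hx
    by_cases hxv : x.val < n - g
    · have hax : a ≤ x.val := Nat.sInf_le ⟨hxv, x.2, by simpa using hx⟩
      exact Or.inl ⟨hax, by omega⟩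
    · exact Or.inr ⟨⟨x, by omega⟩, hx, rfl⟩
  · rintro (⟨h1, h2⟩ | ⟨y, hy, rfl⟩)
    · obtain ⟨-, hlt, hmem⟩ := hint x.val h1 h2
      have : (⟨x.val, hlt⟩ : Fin n) = x := Fin.ext rfl
      rwa [this] at hmem
    · exact hy

/-- decomposition of a connected set with no pendant vertices -/
lemma decomp2 {S : Set (Fin n)} (hconn : ((pathStar n g).induce S).Connected)
    (h3 : 3 ≤ n - g) (hgn : g ≤ n)
    (hnopend : ∀ x ∈ S, x.val < n - g) {i : Fin n} (hi : i ∈ S) :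
    ∃ a b, a ≤ i.val ∧ i.val ≤ b ∧ b ≤ n - g - 1 ∧ S = iv n a b := by
  classical
  have hiv : i.val < n - g := hnopend i hi
  set C : Set ℕ := {c : ℕ | c < n - g ∧ ∃ h : c < n, (⟨c, h⟩ : Fin n) ∈ S} with hC
  have hCne : i.val ∈ C := ⟨hiv, i.2, by simpa using hi⟩
  have hbdd : BddAbove C := ⟨n - g, fun c hc => le_of_lt hc.1⟩
  set a := sInf C with ha
  set b := sSup C with hb
  have haC : a ∈ C := Nat.sInf_mem ⟨_, hCne⟩
  have hbC : b ∈ C := Nat.sSup_mem ⟨_, hCne⟩ hbdd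
  have hai : a ≤ i.val := Nat.sInf_le hCne
  have hib : i.val ≤ b := le_csSup hbdd hCne
  have hblt : b < n - g := hbC.1
  have hint : ∀ c, a ≤ c → c ≤ b → c ∈ C := by
    intro c h1 h2
    by_cases hcb : c = b
    · exact hcb ▸ hbC
    · have hc2 : c + 2 ≤ n - g := by omega
      obtain ⟨haC1, hac, haS⟩ := haC
      obtain ⟨hbC1, hbc, hbS⟩ := hbC
      have := mem_of_between hconn h3 hgn haS hbS (c := c)
        (by show min a (n - g - 1) ≤ c; omega) (by show c ≤ min b (n - g - 1); omega) hc2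
      exact ⟨by omega, by omega, this⟩
  refine ⟨a, b, hai, hib, by omega, ?_⟩
  ext x
  constructor
  · intro hx
    have hxv : x.val < n - g := hnopend x hx
    have hax : a ≤ x.val := Nat.sInf_le ⟨hxv, x.2, by simpa using hx⟩
    have hxb : x.val ≤ b := le_csSup hbdd ⟨hxv, x.2, by simpa using hx⟩
    exact ⟨hax, hxb⟩
  · rintro ⟨h1, h2⟩
    obtain ⟨-, hlt, hmem⟩ := hint x.val h1 h2
    have : (⟨x.val, hlt⟩ : Fin n) = x := Fin.ext rfl
    rwa [this] at hmem

/-- the shape map for sets touching the hub -/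
noncomputable def shp (n g : ℕ) (q : ℕ × Set (Pend n g)) : Set (Fin n) :=
  iv n q.1 (n - g - 1) ∪ Subtype.val '' q.2

lemma shp_injOn (h3 : 3 ≤ n - g) (hgn : g ≤ n) :
    Set.InjOn (shp n g) {q | q.1 ≤ n - g - 1} := by
  rintro ⟨a1, T1⟩ h1 ⟨a2, T2⟩ h2 heq
  simp only [Set.mem_setOf_eq] at h1 h2
  have key : ∀ (x y : ℕ) (Tx Ty : Set (Pend n g)), x ≤ n - g - 1 → y ≤ n - g - 1 →
      shp n g (x, Tx) = shp n g (y, Ty) → y ≤ x := by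
    intro x y Tx Ty hx hy he
    have hmx : (⟨x, by omega⟩ : Fin n) ∈ shp n g (x, Tx) :=
      Or.inl ⟨le_refl _, by show x ≤ n - g - 1; omega⟩
    rw [he] at hmx
    rcases hmx with ⟨hm1, -⟩ | ⟨z, -, hz⟩
    · exact hm1
    · exfalso
      have := z.2
      have : z.1.val = x := by rw [hz]
      omega
  have ha : a1 = a2 := le_antisymm (key a2 a1 T2 T1 h2 h1 heq.symm) (key a1 a2 T1 T2 h1 h2 heq)
  have hT : ∀ (x y : ℕ) (Tx Ty : Set (Pend n g)),
      shp n g (x, Tx) = shp n g (y, Ty) → Tx ⊆ Ty := by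
    intro x y Tx Ty he z hz
    have : z.1 ∈ shp n g (x, Tx) := Or.inr ⟨z, hz, rfl⟩
    rw [he] at this
    rcases this with ⟨-, hm2⟩ | ⟨w, hw, hwz⟩
    · exfalso; have := z.2; omega
    · rwa [← Subtype.ext hwz]
  have hTeq : T1 = T2 := le_antisymm (hT a1 a2 T1 T2 heq) (hT a2 a1 T2 T1 heq.symm)
  simp [ha, hTeq]

/-- the interval map -/
def ivp (n : ℕ) (p : ℕ × ℕ) : Set (Fin n) := iv n p.1 p.2

lemma ivp_injOn (hnn : 0 < n) (hb : B ≤ n - 1) :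
    Set.InjOn (ivp n) {p | p.1 ≤ p.2 ∧ p.2 ≤ B} := by
  rintro ⟨a1, b1⟩ ⟨h1, h1'⟩ ⟨a2, b2⟩ ⟨h2, h2'⟩ heq
  have key : ∀ (x y x' y' : ℕ), x ≤ y → y ≤ B → x' ≤ y' → y' ≤ B →
      ivp n (x, y) = ivp n (x', y') → x' ≤ x ∧ x ≤ y' := by
    intro x y x' y' hxy hyB hxy' hyB' he
    have hmx : (⟨x, by omega⟩ : Fin n) ∈ ivp n (x, y) := ⟨le_refl _, by show x ≤ y; omega⟩
    rw [he] at hmx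
    exact hmx
  have k1 := key a1 b1 a2 b2 h1 h1' h2 h2' heq
  have k2 := key a2 b2 a1 b1 h2 h2' h1 h1' heq.symm
  have key2 : ∀ (x y x' y' : ℕ), x ≤ y → y ≤ B → x' ≤ y' → y' ≤ B →
      ivp n (x, y) = ivp n (x', y') → y ≤ y' := by
    intro x y x' y' hxy hyB hxy' hyB' he
    have hmy : (⟨y, by omega⟩ : Fin n) ∈ ivp n (x, y) := ⟨by show x ≤ y; omega, le_refl _⟩
    rw [he] at hmy
    exact hmy.2
  have k3 := key2 a1 b1 a2 b2 h1 h1' h2 h2' heq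
  have k4 := key2 a2 b2 a1 b1 h2 h2' h1 h1' heq.symm
  simp only [Prod.mk.injEq]
  omega

/-- characterization of connected sets containing path vertex i -/
lemma subtrees_path_eq (h3 : 3 ≤ n - g) (hgn : g ≤ n) (i : Fin n) (hi : i.val < n - g) :
    {S : Set (Fin n) | i ∈ S ∧ ((pathStar n g).induce S).Connected}
      = ivp n '' ((Set.Iic i.val) ×ˢ (Set.Icc i.val (n - g - 2)))
        ∪ shp n g '' ((Set.Iic i.val) ×ˢ (Set.univ : Set (Set (Pend n g)))) := by
  ext S
  constructor
  · rintro ⟨hiS, hconn⟩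
    by_cases hpend : ∃ p ∈ S, n - g ≤ p.val
    · obtain ⟨p, hpS, hpv⟩ := hpend
      have hne : i ≠ p := by intro h; subst h; omega
      have hhub := hub_mem hconn h3 hgn hpS hpv hiS hne
      obtain ⟨a, hale, hamin, hSeq⟩ := decomp hconn h3 hgn hhub
      refine Or.inr ⟨(a, {x : Pend n g | x.1 ∈ S}), ⟨hamin i hiS hi, trivial⟩, hSeq.symm⟩
    · push_neg at hpend
      obtain ⟨a, b, hai, hib, hble, hSeq⟩ := decomp2 hconn h3 hgn hpend hiS
      by_cases hbtop : b = n - g - 1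
      · refine Or.inr ⟨(a, (∅ : Set (Pend n g))), ⟨by simpa using hai, trivial⟩, ?_⟩
        simp only [shp, Set.image_empty, Set.union_empty]
        rw [hSeq, hbtop]
        exact Set.union_eq_left.mpr (by rintro _ ⟨x, hx, -⟩; exact hx.elim)
      · exact Or.inl ⟨(a, b), ⟨hai, hib, by omega⟩, hSeq.symm⟩
  · rintro (⟨⟨a, b⟩, ⟨ha, hb1, hb2⟩, rfl⟩ | ⟨⟨a, T⟩, ⟨ha, -⟩, rfl⟩)
    · have ha' : a ≤ i.val := ha
      constructor
      · exact ⟨ha', hb1⟩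
      · have hc := conn_of_shape (n := n) (g := g) h3 hgn (a := a) (b := b) (by omega)
          (by omega) ∅ (by simp) (by rintro ⟨x, hx⟩; cases hx)
        rwa [Set.union_empty] at hc
    · have ha' : a ≤ i.val := ha
      constructor
      · exact Or.inl ⟨ha', by show i.val ≤ n - g - 1; omega⟩
      · exact conn_of_shape h3 hgn (a := a) (b := n - g - 1) (by omega) (le_refl _)
          (Subtype.val '' T) (by rintro x ⟨y, hy, rfl⟩; exact y.2) (fun _ => rfl)

/-- characterization of connected sets containing pendant vertex p -/
lemma subtrees_pend_eq (h3 : 3 ≤ n - g) (hgn : g ≤ n) (p : Fin n) (hp : n - g ≤ p.val) :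
    {S : Set (Fin n) | p ∈ S ∧ ((pathStar n g).induce S).Connected}
      = {{p}} ∪ shp n g '' ((Set.Iic (n - g - 1)) ×ˢ {T : Set (Pend n g) | ⟨p, hp⟩ ∈ T}) := by
  ext S
  constructor
  · rintro ⟨hpS, hconn⟩
    by_cases hsingle : S = {p}
    · exact Or.inl hsingle
    · have hq : ∃ q ∈ S, q ≠ p := by
        by_contra hc
        push_neg at hc
        exact hsingle (Set.eq_singleton_iff_unique_mem.mpr ⟨hpS, hc⟩)
      obtain ⟨q, hqS, hqp⟩ := hq
      have hhub := hub_mem hconn h3 hgn hpS hp hqS hqp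
      obtain ⟨a, hale, hamin, hSeq⟩ := decomp hconn h3 hgn hhub
      exact Or.inr ⟨(a, {x : Pend n g | x.1 ∈ S}), ⟨hale, hpS⟩, hSeq.symm⟩
  · rintro (rfl | ⟨⟨a, T⟩, ⟨ha, hT⟩, rfl⟩)
    · exact ⟨rfl, singleton_conn _ p⟩
    · constructor
      · exact Or.inr ⟨⟨p, hp⟩, hT, rfl⟩
      · exact conn_of_shape h3 hgn (a := a) (b := n - g - 1) ha (le_refl _)
          (Subtype.val '' T) (by rintro x ⟨y, hy, rfl⟩; exact y.2) (fun _ => rfl)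

instance : Fintype (Pend n g) := by unfold Pend; infer_instance
instance : DecidableEq (Pend n g) := by unfold Pend; infer_instance

lemma card_pend (hgn : g ≤ n) : Nat.card (Pend n g) = g := by
  have e : Pend n g ≃ Fin g :=
    { toFun := fun x => ⟨x.1.val - (n - g), by have h1 := x.2; have h2 := x.1.2; omega⟩
      invFun := fun y => ⟨⟨y.val + (n - g), by have := y.2; omega⟩, by simp⟩
      left_inv := fun x => by
        apply Subtype.ext; apply Fin.ext; have := x.2; simp; omega
      right_inv := fun y => by apply Fin.ext; simp }
  rw [Nat.card_congr e, Nat.card_eq_fintype_card, Fintype.card_fin]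

lemma card_set (α : Type*) [Finite α] : Nat.card (Set α) = 2 ^ Nat.card α := by
  have : Nat.card (Set α) = Nat.card (α → Prop) := rfl
  rw [this, Nat.card_fun]; simp

/-- subsets containing a fixed point ≃ subsets of the complement -/
def memEquiv {α : Type*} (a : α) : {T : Set α // a ∈ T} ≃ Set {x : α // x ≠ a} where
  toFun T := {x | x.1 ∈ T.1}
  invFun U := ⟨{y | y = a ∨ ∃ h : y ≠ a, (⟨y, h⟩ : {x : α // x ≠ a}) ∈ U}, Or.inl rfl⟩
  left_inv := by
    rintro ⟨T, hT⟩
    apply Subtype.ext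
    ext y
    simp only [Set.mem_setOf_eq]
    constructor
    · rintro (rfl | ⟨h, hy⟩)
      · exact hT
      · exact hy
    · intro hy
      by_cases h : y = a
      · exact Or.inl h
      · exact Or.inr ⟨h, hy⟩
  right_inv := by
    intro U
    ext ⟨y, hy⟩
    simp only [Set.mem_setOf_eq]
    constructor
    · rintro (rfl | ⟨h, hmem⟩)
      · exact absurd rfl hy
      · exact hmem
    · intro hmem
      exact Or.inr ⟨hy, hmem⟩

lemma card_ne {α : Type*} [Fintype α] [DecidableEq α] (a : α) :
    Nat.card {x : α // x ≠ a} = Fintype.card α - 1 := by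
  rw [Nat.card_eq_fintype_card]
  have h := Fintype.card_subtype_compl (fun x : α => x = a)
  rw [Fintype.card_subtype_eq] at h
  convert h using 2

lemma card_mem_sets {α : Type*} [Fintype α] [DecidableEq α] (a : α) :
    Nat.card {T : Set α // a ∈ T} = 2 ^ (Fintype.card α - 1) := by
  rw [Nat.card_congr (memEquiv a), card_set, card_ne]

lemma ncard_prod {α β : Type*} (s : Set α) (t : Set β) :
    (s ×ˢ t).ncard = s.ncard * t.ncard := by
  rw [← Nat.card_coe_set_eq, ← Nat.card_coe_set_eq, ← Nat.card_coe_set_eq,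
    Nat.card_congr (Equiv.Set.prod s t), Nat.card_prod]

lemma ncard_Iic (k : ℕ) : (Set.Iic k).ncard = k + 1 := by
  rw [← Finset.coe_Iic, Set.ncard_coe_finset, Nat.card_Iic]

lemma ncard_Icc (a b : ℕ) : (Set.Icc a b).ncard = b + 1 - a := by
  rw [← Finset.coe_Icc, Set.ncard_coe_finset, Nat.card_Icc]

lemma count_path (h3 : 3 ≤ n - g) (hgn : g ≤ n) (i : Fin n) (hi : i.val < n - g) :
    numSubtrees (pathStar n g) i
      = (i.val + 1) * (n - g - (i.val + 1)) + (i.val + 1) * 2 ^ g := by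
  unfold numSubtrees numSubtreesOn
  simp only [Set.singleton_subset_iff]
  rw [subtrees_path_eq h3 hgn i hi]
  have hdisj : Disjoint
      (ivp n '' ((Set.Iic i.val) ×ˢ (Set.Icc i.val (n - g - 2))))
      (shp n g '' ((Set.Iic i.val) ×ˢ (Set.univ : Set (Set (Pend n g))))) := by
    rw [Set.disjoint_left]
    rintro S ⟨⟨a, b⟩, ⟨ha, hb1, hb2⟩, rfl⟩ ⟨⟨a', T⟩, ⟨ha', -⟩, heq⟩
    have ha'' : a' ≤ i.val := ha'
    have hb2' : b ≤ n - g - 2 := hb2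
    have hub : (⟨n - g - 1, by omega⟩ : Fin n) ∈ shp n g (a', T) :=
      Or.inl ⟨by show a' ≤ n - g - 1; omega, le_refl _⟩
    rw [heq] at hub
    have : (n - g - 1 : ℕ) ≤ b := hub.2
    omega
  rw [Set.ncard_union_eq hdisj (Set.toFinite _) (Set.toFinite _)]
  have h1 : (ivp n '' ((Set.Iic i.val) ×ˢ (Set.Icc i.val (n - g - 2)))).ncard
      = (i.val + 1) * (n - g - (i.val + 1)) := by
    rw [Set.ncard_image_of_injOn ((ivp_injOn (by omega) (by omega : n - g - 2 ≤ n - 1)).mono ?_)]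
    · rw [← Finset.coe_Iic, ← Finset.coe_Icc, ← Finset.coe_product, Set.ncard_coe_finset,
        Finset.card_product, Nat.card_Iic, Nat.card_Icc]
      congr 1
      omega
    · rintro ⟨x, y⟩ ⟨hx, hy1, hy2⟩
      exact ⟨le_trans hx hy1, hy2⟩
  have h2 : (shp n g '' ((Set.Iic i.val) ×ˢ (Set.univ : Set (Set (Pend n g))))).ncard
      = (i.val + 1) * 2 ^ g := by
    rw [Set.ncard_image_of_injOn ((shp_injOn h3 hgn).mono ?_)]
    · rw [ncard_prod, ncard_Iic, Set.ncard_univ, card_set, card_pend hgn]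
    · rintro ⟨x, T⟩ ⟨hx, -⟩
      have hx' : x ≤ i.val := hx
      show x ≤ n - g - 1
      omega
  rw [h1, h2]

lemma count_pend (h3 : 3 ≤ n - g) (hgn : g ≤ n) (hg1 : 1 ≤ g) (p : Fin n)
    (hp : n - g ≤ p.val) :
    numSubtrees (pathStar n g) p = 1 + (n - g) * 2 ^ (g - 1) := by
  unfold numSubtrees numSubtreesOn
  simp only [Set.singleton_subset_iff]
  rw [subtrees_pend_eq h3 hgn p hp]
  have hdisj : Disjoint ({({p} : Set (Fin n))} : Set (Set (Fin n)))
      (shp n g '' ((Set.Iic (n - g - 1)) ×ˢ {T : Set (Pend n g) | ⟨p, hp⟩ ∈ T})) := by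
    rw [Set.disjoint_left]
    rintro S rfl ⟨⟨a, T⟩, ⟨ha, -⟩, heq⟩
    have ha' : a ≤ n - g - 1 := ha
    have hub : (⟨n - g - 1, by omega⟩ : Fin n) ∈ shp n g (a, T) :=
      Or.inl ⟨ha', le_refl _⟩
    rw [heq] at hub
    have : (⟨n - g - 1, by omega⟩ : Fin n) = p := hub
    have := congrArg Fin.val this
    simp at this
    omega
  rw [Set.ncard_union_eq hdisj (Set.toFinite _) (Set.toFinite _), Set.ncard_singleton]
  have h2 : (shp n g '' ((Set.Iic (n - g - 1)) ×ˢ {T : Set (Pend n g) | ⟨p, hp⟩ ∈ T})).ncard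
      = (n - g) * 2 ^ (g - 1) := by
    rw [Set.ncard_image_of_injOn ((shp_injOn h3 hgn).mono ?_)]
    · rw [ncard_prod, ncard_Iic]
      have hT : ({T : Set (Pend n g) | ⟨p, hp⟩ ∈ T}).ncard = 2 ^ (g - 1) := by
        rw [← Nat.card_coe_set_eq,
          Nat.card_congr (Equiv.subtypeEquivRight (fun T => Iff.rfl) :
            {T : Set (Pend n g) // T ∈ {T : Set (Pend n g) | ⟨p, hp⟩ ∈ T}}
              ≃ {T : Set (Pend n g) // (⟨p, hp⟩ : Pend n g) ∈ T})]
        refine (card_mem_sets (α := Pend n g) ⟨p, hp⟩).trans ?_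
        congr 2
        rw [← Nat.card_eq_fintype_card, card_pend hgn]
      rw [hT]
      congr 1
      omega
    · rintro ⟨x, T⟩ ⟨hx, -⟩
      exact hx
  rw [h2]

end PS

/-- Subtree counts in the path-star tree `P_{n-g,g}`: the vertex with paper label `i`
(`1 ≤ i ≤ n-g`, Lean index `i - 1`) lies in `i (n-g-i) + i 2^g` subtrees, and each of the
`g` pendant vertices attached to vertex `n-g` lies in `1 + (n-g) 2^{g-1}` subtrees. -/
theorem numSubtrees_pathStar (n g : ℕ) (hn : 5 ≤ n) (hg2 : 2 ≤ g) (hg : g ≤ n - 3)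
    (i : Fin n) :
    (i.val < n - g → numSubtrees (pathStar n g) i
        = (i.val + 1) * (n - g - (i.val + 1)) + (i.val + 1) * 2 ^ g) ∧
    (n - g ≤ i.val → numSubtrees (pathStar n g) i = 1 + (n - g) * 2 ^ (g - 1)) := by
  constructor
  · intro h
    exact PS.count_path (by omega) (by omega) i h
  · intro h
    exact PS.count_pend (by omega) (by omega) (by omega) i h
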